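/- Let G be a finite simple graph that is weakly f-degenerate for a function f : V(G) → ℕ. Suppose every vertex u is given a finite set L(u) of colors and every edge uv is assigned a matching C_uv between L(u) and L(v) (a set of pairs in which no color of L(u) and no color of L(v) appears more than once). If |L(u)| ≥ f(u) + 1 for all vertices u, then G admits a proper (L,C)-coloring, i.e., a function φ with φ(u) ∈ L(u) for all u and with the pair (φ(u), φ(v)) not in C_uv for every edge uv. -/
import Mathlib


open scoped Classical

namespace WeakDeg

variable {V : Type*}

/-- `WeakDegenOn G S f` means: starting from the induced subgraph `G[S]` of `G` with value
function `f`, it is possible to remove all vertices by a sequence of legal applications of the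
operations `Delete` and `DelSave`. `Delete(u)` removes `u` and decreases by one the value of
every remaining neighbor of `u`; it is legal if the resulting function is nonnegative on the
remaining vertices. `DelSave(u, w)` (for `w` a neighbor of `u` with `f w < f u`) removes `u` and
decreases by one the value of every remaining neighbor of `u` except `w`; it is legal if
`f w < f u` and the resulting function is nonnegative on the remaining vertices. -/
inductive WeakDegenOn (G : SimpleGraph V) : Finset V → (V → ℤ) → Prop
  | empty (f : V → ℤ) : WeakDegenOn G ∅ f
  | delete (S : Finset V) (f : V → ℤ) (u : V) (hu : u ∈ S)
      (hleg : ∀ v ∈ S.erase u, 0 ≤ if G.Adj u v then f v - 1 else f v)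
      (h : WeakDegenOn G (S.erase u) fun v => if G.Adj u v then f v - 1 else f v) :
      WeakDegenOn G S f
  | delSave (S : Finset V) (f : V → ℤ) (u w : V) (hu : u ∈ S) (hw : w ∈ S)
      (hadj : G.Adj u w) (hlt : f w < f u)
      (hleg : ∀ v ∈ S.erase u, 0 ≤ if G.Adj u v ∧ v ≠ w then f v - 1 else f v)
      (h : WeakDegenOn G (S.erase u) fun v => if G.Adj u v ∧ v ≠ w then f v - 1 else f v) :
      WeakDegenOn G S f

/-- `G` is weakly `f`-degenerate, for `f : V → ℕ`. -/
def WeaklyDegenerateWith (G : SimpleGraph V) [Fintype V] (f : V → ℕ) : Prop :=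
  WeakDegenOn G Finset.univ fun v => (f v : ℤ)

/-- `G` is weakly `d`-degenerate. -/
def WeaklyDegenerate (G : SimpleGraph V) [Fintype V] (d : ℕ) : Prop :=
  WeaklyDegenerateWith G fun _ => d

/-- The weak degeneracy `wd(G)` of `G`: the least `d` such that `G` is weakly `d`-degenerate. -/
noncomputable def weakDegeneracy (G : SimpleGraph V) [Fintype V] : ℕ :=
  sInf {d : ℕ | WeaklyDegenerate G d}

private lemma exists_unmatched (C : V → V → Finset (ℕ × ℕ)) (u w : V)
    (hM : ∀ p ∈ C u w, ∀ q ∈ C u w, p.2 = q.2 → p.1 = q.1)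
    (A B : Finset ℕ) (hcard : B.card < A.card) :
    ∃ c ∈ A, ∀ b ∈ B, (c, b) ∉ C u w := by
  set M := A.filter (fun c => ∃ b ∈ B, (c, b) ∈ C u w) with hMdef
  set g : ℕ → ℕ := fun c =>
    if hc : ∃ b ∈ B, (c, b) ∈ C u w then hc.choose else 0 with hgdef
  have hg : ∀ c ∈ M, g c ∈ B ∧ (c, g c) ∈ C u w := by
    intro c hc
    rw [hMdef, Finset.mem_filter] at hc
    rw [hgdef]
    simp only [hc.2, dif_pos]
    exact hc.2.choose_spec
  have hMB : M.card ≤ B.card := by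
    apply Finset.card_le_card_of_injOn g (fun c hc => (hg c hc).1)
    intro c hc c' hc' he
    exact hM (c, g c) (hg c hc).2 (c', g c') (hg c' hc').2 he
  have hne : (A \ M).Nonempty := by
    rw [← Finset.card_pos, Finset.card_sdiff_of_subset (Finset.filter_subset _ _), ← hMdef]
    omega
  obtain ⟨c, hc⟩ := hne
  rw [Finset.mem_sdiff, hMdef, Finset.mem_filter] at hc
  refine ⟨c, hc.1, fun b hb hmem => hc.2 ⟨hc.1, b, hb, hmem⟩⟩

private lemma matched_card_le_one (C : V → V → Finset (ℕ × ℕ)) (u v : V)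
    (hM : ∀ p ∈ C u v, ∀ q ∈ C u v, p.1 = q.1 → p.2 = q.2)
    (s : Finset ℕ) (c : ℕ) :
    (s.filter (fun b => (c, b) ∈ C u v)).card ≤ 1 := by
  apply Finset.card_le_one.2
  intro b hb b' hb'
  rw [Finset.mem_filter] at hb hb'
  exact hM (c, b) hb.2 (c, b') hb'.2 rfl

private lemma aux (G : SimpleGraph V) (C : V → V → Finset (ℕ × ℕ))
    (hCmatch : ∀ u v, G.Adj u v → ∀ p ∈ C u v, ∀ q ∈ C u v,
      (p.1 = q.1 → p.2 = q.2) ∧ (p.2 = q.2 → p.1 = q.1))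
    (hCsymm : ∀ u v, G.Adj u v → ∀ a b : ℕ, (a, b) ∈ C u v ↔ (b, a) ∈ C v u)
    (S : Finset V) (f : V → ℤ) (h : WeakDegenOn G S f) :
    ∀ L : V → Finset ℕ, (∀ v ∈ S, 0 ≤ f v) → (∀ v ∈ S, f v + 1 ≤ ((L v).card : ℤ)) →
    ∃ φ : V → ℕ, (∀ v ∈ S, φ v ∈ L v) ∧
      ∀ u ∈ S, ∀ v ∈ S, G.Adj u v → (φ u, φ v) ∉ C u v := by
  induction h with
  | empty f => exact fun L _ _ => ⟨fun _ => 0, by simp, by simp⟩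
  | delete S f u hu hleg h ih =>
    intro L hf0 hL
    have hLu : (L u).Nonempty := by
      rw [← Finset.card_pos]
      have h1 := hL u hu; have h2 := hf0 u hu
      have : (0 : ℤ) < ((L u).card : ℤ) := by linarith
      exact_mod_cast this
    obtain ⟨c, hc⟩ := hLu
    set L' : V → Finset ℕ := fun v =>
      if G.Adj u v then L v \ (L v).filter (fun b => (c, b) ∈ C u v) else L v with hL'def
    have hL'sub : ∀ v, L' v ⊆ L v := by
      intro v; rw [hL'def]; dsimp only
      split
      · exact Finset.sdiff_subset
      · exact subset_rfl
    have hL'card : ∀ v ∈ S.erase u,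
        (if G.Adj u v then f v - 1 else f v) + 1 ≤ ((L' v).card : ℤ) := by
      intro v hv
      have hvS := Finset.mem_of_mem_erase hv
      have hLv := hL v hvS
      rw [hL'def]; dsimp only
      split
      · rename_i hadj
        have hT := matched_card_le_one C u v
          (fun p hp q hq => (hCmatch u v hadj p hp q hq).1) (L v) c
        rw [Finset.card_sdiff_of_subset (Finset.filter_subset _ _)]
        have hle : ((L v).filter (fun b => (c, b) ∈ C u v)).card ≤ (L v).card :=
          Finset.card_le_card (Finset.filter_subset _ _)
        push_cast [Nat.cast_sub hle]
        omega
      · linarith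
    obtain ⟨φ, hφmem, hφcon⟩ := ih L' hleg hL'card
    refine ⟨Function.update φ u c, ?_, ?_⟩
    · intro v hv
      by_cases hvu : v = u
      · subst hvu; rwa [Function.update_self]
      · rw [Function.update_of_ne hvu]
        exact hL'sub v (hφmem v (Finset.mem_erase.2 ⟨hvu, hv⟩))
    · intro x hx y hy hxy
      have hxyne : x ≠ y := hxy.ne
      have key : ∀ z ∈ S.erase u, G.Adj u z → (c, φ z) ∉ C u z := by
        intro z hz hadj hmem
        have hφz := hφmem z hz
        rw [hL'def] at hφz; dsimp only at hφz
        rw [if_pos hadj, Finset.mem_sdiff] at hφz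
        exact hφz.2 (Finset.mem_filter.2 ⟨hφz.1, hmem⟩)
      by_cases hxu : x = u
      · subst hxu
        have hyu : y ≠ x := hxy.ne'
        rw [Function.update_self, Function.update_of_ne hyu]
        exact key y (Finset.mem_erase.2 ⟨hyu, hy⟩) hxy
      · by_cases hyu : y = u
        · subst hyu
          rw [Function.update_self, Function.update_of_ne hxu]
          intro hmem
          rw [hCsymm x y hxy (φ x) c] at hmem
          exact key x (Finset.mem_erase.2 ⟨hxu, hx⟩) hxy.symm hmem
        · rw [Function.update_of_ne hxu, Function.update_of_ne hyu]
          exact hφcon x (Finset.mem_erase.2 ⟨hxu, hx⟩) y (Finset.mem_erase.2 ⟨hyu, hy⟩) hxy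
  | delSave S f u w hu hw hadj hlt hleg h ih =>
    intro L hf0 hL
    have hwu : w ≠ u := hadj.ne'
    have hwS : w ∈ S.erase u := Finset.mem_erase.2 ⟨hwu, hw⟩
    have hfw0 : 0 ≤ f w := hf0 w hw
    have hfu0 : 0 ≤ f u := le_of_lt (lt_of_le_of_lt hfw0 hlt)
    -- trim the list of w to exactly f w + 1 colors
    have htrim : (f w + 1).toNat ≤ (L w).card := by
      have := hL w hw; omega
    obtain ⟨Lw, hLwsub, hLwcard⟩ := Finset.exists_subset_card_eq htrim
    have hLwcard' : (Lw.card : ℤ) = f w + 1 := by rw [hLwcard]; omega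
    -- choose a color of u not matched into Lw
    have hcardlt : Lw.card < (L u).card := by
      have h1 := hL u hu
      have : (Lw.card : ℤ) < ((L u).card : ℤ) := by omega
      exact_mod_cast this
    obtain ⟨c, hc, hcun⟩ := exists_unmatched C u w
      (fun p hp q hq => (hCmatch u w hadj p hp q hq).2) (L u) Lw hcardlt
    set L' : V → Finset ℕ := fun v =>
      if v = w then Lw
      else if G.Adj u v then L v \ (L v).filter (fun b => (c, b) ∈ C u v) else L v with hL'def
    have hL'sub : ∀ v, L' v ⊆ L v := by
      intro v; rw [hL'def]; dsimp only
      split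
      · rename_i hvw; subst hvw; exact hLwsub
      · split
        · exact Finset.sdiff_subset
        · exact subset_rfl
    have hL'card : ∀ v ∈ S.erase u,
        (if G.Adj u v ∧ v ≠ w then f v - 1 else f v) + 1 ≤ ((L' v).card : ℤ) := by
      intro v hv
      have hvS := Finset.mem_of_mem_erase hv
      have hLv := hL v hvS
      rw [hL'def]; dsimp only
      by_cases hvw : v = w
      · subst hvw
        rw [if_pos rfl, if_neg (by simp)]
        omega
      · rw [if_neg hvw]
        by_cases hadjv : G.Adj u v
        · rw [if_pos ⟨hadjv, hvw⟩, if_pos hadjv]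
          have hT := matched_card_le_one C u v
            (fun p hp q hq => (hCmatch u v hadjv p hp q hq).1) (L v) c
          rw [Finset.card_sdiff_of_subset (Finset.filter_subset _ _)]
          have hle : ((L v).filter (fun b => (c, b) ∈ C u v)).card ≤ (L v).card :=
            Finset.card_le_card (Finset.filter_subset _ _)
          push_cast [Nat.cast_sub hle]
          omega
        · rw [if_neg (fun hcon => hadjv hcon.1), if_neg hadjv]
          linarith
    obtain ⟨φ, hφmem, hφcon⟩ := ih L' hleg hL'card
    refine ⟨Function.update φ u c, ?_, ?_⟩
    · intro v hv
      by_cases hvu : v = u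
      · subst hvu; rwa [Function.update_self]
      · rw [Function.update_of_ne hvu]
        exact hL'sub v (hφmem v (Finset.mem_erase.2 ⟨hvu, hv⟩))
    · intro x hx y hy hxy
      have key : ∀ z ∈ S.erase u, G.Adj u z → (c, φ z) ∉ C u z := by
        intro z hz hadjz hmem
        have hφz := hφmem z hz
        rw [hL'def] at hφz; dsimp only at hφz
        by_cases hzw : z = w
        · subst hzw
          rw [if_pos rfl] at hφz
          exact hcun (φ z) hφz hmem
        · rw [if_neg hzw, if_pos hadjz, Finset.mem_sdiff] at hφz
          exact hφz.2 (Finset.mem_filter.2 ⟨hφz.1, hmem⟩)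
      by_cases hxu : x = u
      · subst hxu
        have hyu : y ≠ x := hxy.ne'
        rw [Function.update_self, Function.update_of_ne hyu]
        exact key y (Finset.mem_erase.2 ⟨hyu, hy⟩) hxy
      · by_cases hyu : y = u
        · subst hyu
          rw [Function.update_self, Function.update_of_ne hxu]
          intro hmem
          rw [hCsymm x y hxy (φ x) c] at hmem
          exact key x (Finset.mem_erase.2 ⟨hxu, hx⟩) hxy.symm hmem
        · rw [Function.update_of_ne hxu, Function.update_of_ne hyu]
          exact hφcon x (Finset.mem_erase.2 ⟨hxu, hx⟩) y (Finset.mem_erase.2 ⟨hyu, hy⟩) hxy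

/-- If `G` is weakly `f`-degenerate, lists `L` satisfy `|L(u)| ≥ f(u) + 1`, and each edge `uv`
carries a matching `C u v` between `L u` and `L v`, then `G` has a proper `(L, C)`-coloring. -/
theorem weaklyDegenerateWith_DP_colorable {V : Type*} [Fintype V] (G : SimpleGraph V)
    (f : V → ℕ) (hf : WeaklyDegenerateWith G f)
    (L : V → Finset ℕ) (C : V → V → Finset (ℕ × ℕ))
    -- every pair in the matching `C u v` consists of a color of `L u` and a color of `L v`
    (hCmem : ∀ u v, G.Adj u v → ∀ p ∈ C u v, p.1 ∈ L u ∧ p.2 ∈ L v)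
    -- `C u v` is a matching: no color of `L u` and no color of `L v` appears more than once
    (hCmatch : ∀ u v, G.Adj u v → ∀ p ∈ C u v, ∀ q ∈ C u v,
      (p.1 = q.1 → p.2 = q.2) ∧ (p.2 = q.2 → p.1 = q.1))
    -- the matchings on the two orientations of an edge agree
    (hCsymm : ∀ u v, G.Adj u v → ∀ a b : ℕ, (a, b) ∈ C u v ↔ (b, a) ∈ C v u)
    (hL : ∀ u, f u + 1 ≤ (L u).card) :
    ∃ φ : V → ℕ, (∀ u, φ u ∈ L u) ∧ ∀ u v, G.Adj u v → (φ u, φ v) ∉ C u v := by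
  obtain ⟨φ, h1, h2⟩ := aux G C hCmatch hCsymm Finset.univ (fun v => (f v : ℤ)) hf L
    (fun v _ => Int.ofNat_nonneg _)
    (fun v _ => by have := hL v; push_cast; omega)
  exact ⟨φ, fun u => h1 u (Finset.mem_univ u),
    fun u v huv => h2 u (Finset.mem_univ u) v (Finset.mem_univ v) huv⟩

end WeakDeg
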